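/- Let k ≥ 1 be an integer and let m₁,…,m_k be nonnegative integers. Then det_{k×k}( 1/(2k+1+m_i−i−j)! ) = ( ∏_{i=1}^{k} 1/(2k−i+m_i)! ) · ∏_{1≤i<j≤k} ( m_j − m_i − j + i ); here every argument 2k+1+m_i−i−j of the factorials on the left is at least 1. -/

import Mathlib

open Finset

noncomputable section

/-- **Lemma (a determinant of reciprocal factorials).**
`det_{k×k}(1/(2k+1+mᵢ−i−j)!) = (∏ᵢ 1/(2k−i+mᵢ)!)·∏_{i<j}(m_j−mᵢ−j+i)`.
With `0`-based indices `i,j : Fin k` the entry index `2k+1+mᵢ−i−j` becomes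
`2k+1+m i−(i+1)−(j+1)` (each such argument is at least `1`), and `−j+i` (1-based)
equals `−(p.2)+p.1` (0-based). -/
theorem det_reciprocal_factorials (k : ℕ) (hk : 1 ≤ k) (m : Fin k → ℕ) :
    (Matrix.of fun i j : Fin k =>
        (1 : ℝ) / ((2 * k + 1 + m i - ((i : ℕ) + 1) - ((j : ℕ) + 1)).factorial : ℝ)).det =
      (∏ i : Fin k, (1 : ℝ) / ((2 * k - ((i : ℕ) + 1) + m i).factorial : ℝ)) *
        ∏ p ∈ Finset.univ.filter (fun p : Fin k × Fin k => p.1 < p.2),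
          ((((m p.2 : ℤ) - (m p.1 : ℤ) - ((p.2 : ℕ) : ℤ) + ((p.1 : ℕ) : ℤ)) : ℤ) : ℝ) := by
  -- abbreviate the row parameters
  set N : Fin k → ℕ := fun i => 2 * k - ((i : ℕ) + 1) + m i with hN
  have hNk : ∀ i : Fin k, k ≤ N i := by
    intro i
    have : (i : ℕ) + 1 ≤ k := i.2
    simp only [hN]; omega
  -- Step 1: rewrite each entry as (1/(N i)!) * descFactorial (N i) j
  have hentry : ∀ i j : Fin k,
      (1 : ℝ) / ((2 * k + 1 + m i - ((i : ℕ) + 1) - ((j : ℕ) + 1)).factorial : ℝ) =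
      (1 / ((N i).factorial : ℝ)) * ((N i).descFactorial (j : ℕ) : ℝ) := by
    intro i j
    have hij : 2 * k + 1 + m i - ((i : ℕ) + 1) - ((j : ℕ) + 1) = N i - (j : ℕ) := by
      have hi : (i : ℕ) + 1 ≤ k := i.2
      simp only [hN]; omega
    have hjN : (j : ℕ) ≤ N i := le_trans (le_of_lt j.2) (hNk i)
    have key : ((N i - (j : ℕ)).factorial : ℝ) * ((N i).descFactorial (j : ℕ) : ℝ)
        = ((N i).factorial : ℝ) := by
      rw [← Nat.cast_mul, Nat.factorial_mul_descFactorial hjN]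
    have h1 : ((N i - (j : ℕ)).factorial : ℝ) ≠ 0 := Nat.cast_ne_zero.2 (Nat.factorial_ne_zero _)
    have h2 : ((N i).factorial : ℝ) ≠ 0 := Nat.cast_ne_zero.2 (Nat.factorial_ne_zero _)
    rw [hij]
    field_simp
    linarith [key]
  have hM : (Matrix.of fun i j : Fin k =>
        (1 : ℝ) / ((2 * k + 1 + m i - ((i : ℕ) + 1) - ((j : ℕ) + 1)).factorial : ℝ)) =
      (Matrix.of fun i j : Fin k =>
        (1 / ((N i).factorial : ℝ)) * ((N i).descFactorial (j : ℕ) : ℝ)) := by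
    ext i j; exact hentry i j
  rw [hM, Matrix.det_mul_column (fun i => 1 / ((N i).factorial : ℝ))
    (fun i j : Fin k => ((N i).descFactorial (j : ℕ) : ℝ))]
  -- Step 2: the remaining determinant is a Vandermonde determinant
  have hdesc : Matrix.det (fun i j : Fin k => ((N i).descFactorial (j : ℕ) : ℝ)) =
      (Matrix.vandermonde fun i : Fin k => ((N i : ℕ) : ℝ)).det := by
    have := Matrix.det_eval_matrixOfPolynomials_eq_det_vandermonde
      (fun i : Fin k => ((N i : ℕ) : ℝ)) (fun j : Fin k => descPochhammer ℝ (j : ℕ))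
      (fun i => descPochhammer_natDegree (R := ℝ) (i : ℕ)) (fun i => monic_descPochhammer _ _)
    rw [this]
    congr 1
    ext i j
    simp [descPochhammer_eval_eq_descFactorial]
  rw [hdesc, Matrix.det_vandermonde]
  congr 1
  -- Step 3: identify the two products of differences
  have hIoi : ∀ i : Fin k, Finset.Ioi i = Finset.univ.filter (fun j => i < j) := by
    intro i; ext j; simp
  rw [Finset.prod_filter]
  rw [Fintype.prod_prod_type]
  refine Finset.prod_congr rfl fun i _ => ?_
  rw [hIoi i, Finset.prod_filter]
  refine Finset.prod_congr rfl fun j _ => ?_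
  by_cases h : i < j
  · simp only [h, if_true]
    have hi : (i : ℕ) + 1 ≤ 2 * k := by have := i.2; omega
    have hj : (j : ℕ) + 1 ≤ 2 * k := by have := j.2; omega
    simp only [hN]
    push_cast [Nat.sub_add_comm, Nat.cast_sub hi, Nat.cast_sub hj]
    ring
  · simp [h]
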